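/- (Antipode.) Let g = g₀ ⊕ g₁ be an elementary Lie algebra of order three over ℂ, U(g) its universal enveloping algebra with canonical map ι, and q ∈ ℂ a primitive cube root of unity. Suppose 𝒜 : ℤ/3ℤ → Submodule ℂ U(g) is a grading making U(g) a ℤ₃-graded algebra such that ι(x,0) ∈ 𝒜₀ for all x ∈ g₀ and ι(0,y) ∈ 𝒜₁ for all y ∈ g₁. Then there exists a ℂ-linear map S : U(g) → U(g) satisfying S(1) = 1, S(ι z) = −ι z for every z ∈ g₀ ⊕ g₁, and the twisted anti-multiplicativity S(ab) = q^{|a||b|} S(b) S(a) for all homogeneous a, b ∈ U(g); moreover such a map S is unique. -/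

import Mathlib

variable {g₀ g₁ : Type*} [LieRing g₀] [LieAlgebra ℂ g₀]
  [AddCommGroup g₁] [Module ℂ g₁] [LieRingModule g₀ g₁] [LieModule ℂ g₀ g₁]

/-- The relation on the tensor algebra `T(g₀ ⊕ g₁)` whose quotient is the
universal enveloping algebra of an elementary Lie algebra of order three
`g = g₀ ⊕ g₁` with ternary bracket `t`. -/
def envRel (t : g₁ →ₗ[ℂ] g₁ →ₗ[ℂ] g₁ →ₗ[ℂ] g₀) :
    TensorAlgebra ℂ (g₀ × g₁) → TensorAlgebra ℂ (g₀ × g₁) → Prop :=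
  fun a b =>
    (∃ x₁ x₂ : g₀,
      a = TensorAlgebra.ι ℂ ((x₁, 0) : g₀ × g₁) * TensorAlgebra.ι ℂ ((x₂, 0) : g₀ × g₁) ∧
      b = TensorAlgebra.ι ℂ ((x₂, 0) : g₀ × g₁) * TensorAlgebra.ι ℂ ((x₁, 0) : g₀ × g₁) +
        TensorAlgebra.ι ℂ ((⁅x₁, x₂⁆, 0) : g₀ × g₁)) ∨
    (∃ (x : g₀) (y : g₁),
      a = TensorAlgebra.ι ℂ ((x, 0) : g₀ × g₁) * TensorAlgebra.ι ℂ ((0, y) : g₀ × g₁) ∧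
      b = TensorAlgebra.ι ℂ ((0, y) : g₀ × g₁) * TensorAlgebra.ι ℂ ((x, 0) : g₀ × g₁) +
        TensorAlgebra.ι ℂ ((0, ⁅x, y⁆) : g₀ × g₁)) ∨
    (∃ y : Fin 3 → g₁,
      a = ∑ σ : Equiv.Perm (Fin 3),
        TensorAlgebra.ι ℂ ((0, y (σ 0)) : g₀ × g₁) *
        TensorAlgebra.ι ℂ ((0, y (σ 1)) : g₀ × g₁) *
        TensorAlgebra.ι ℂ ((0, y (σ 2)) : g₀ × g₁) ∧
      b = TensorAlgebra.ι ℂ ((t (y 0) (y 1) (y 2), 0) : g₀ × g₁))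

/-- The universal enveloping algebra `U(g)` of an elementary Lie algebra of
order three, as a quotient of the tensor algebra `T(g₀ ⊕ g₁)`. -/
def UEnv (t : g₁ →ₗ[ℂ] g₁ →ₗ[ℂ] g₁ →ₗ[ℂ] g₀) : Type _ := RingQuot (envRel t)

noncomputable instance (t : g₁ →ₗ[ℂ] g₁ →ₗ[ℂ] g₁ →ₗ[ℂ] g₀) : Ring (UEnv t) :=
  inferInstanceAs (Ring (RingQuot (envRel t)))

noncomputable instance (t : g₁ →ₗ[ℂ] g₁ →ₗ[ℂ] g₁ →ₗ[ℂ] g₀) : Algebra ℂ (UEnv t) :=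
  inferInstanceAs (Algebra ℂ (RingQuot (envRel t)))

/-- The canonical map `ι : g₀ ⊕ g₁ → U(g)`. -/
noncomputable def envι (t : g₁ →ₗ[ℂ] g₁ →ₗ[ℂ] g₁ →ₗ[ℂ] g₀) (z : g₀ × g₁) : UEnv t :=
  RingQuot.mkAlgHom ℂ (envRel t) (TensorAlgebra.ι ℂ z)

set_option linter.unusedSectionVars false

namespace AntipodeAux

variable (t : g₁ →ₗ[ℂ] g₁ →ₗ[ℂ] g₁ →ₗ[ℂ] g₀)

/-- `envι` as a linear map. -/
noncomputable def envιₗ : (g₀ × g₁) →ₗ[ℂ] UEnv t :=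
  ((RingQuot.mkAlgHom ℂ (envRel t)).toLinearMap).comp (TensorAlgebra.ι ℂ)

lemma envιₗ_apply (z : g₀ × g₁) : envιₗ t z = envι t z := rfl

lemma envι_split (x : g₀) (y : g₁) :
    envι t (x, y) = envι t (x, 0) + envι t (0, y) := by
  have h : ((x, y) : g₀ × g₁) = (x, 0) + (0, y) := by simp [Prod.ext_iff]
  rw [← envιₗ_apply, h, map_add, envιₗ_apply, envιₗ_apply]

lemma envι_neg (z : g₀ × g₁) : envι t (-z) = - envι t z := by
  rw [← envιₗ_apply, map_neg, envιₗ_apply]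

lemma rel0 (x₁ x₂ : g₀) :
    envι t (x₁, 0) * envι t (x₂, 0) =
      envι t (x₂, 0) * envι t (x₁, 0) + envι t (⁅x₁, x₂⁆, 0) := by
  have h := RingQuot.mkAlgHom_rel ℂ
    (show envRel t _ _ from Or.inl ⟨x₁, x₂, rfl, rfl⟩)
  simp only [map_mul, map_add] at h
  exact h

lemma rel1 (x : g₀) (y : g₁) :
    envι t (x, 0) * envι t (0, y) =
      envι t (0, y) * envι t (x, 0) + envι t (0, ⁅x, y⁆) := by
  have h := RingQuot.mkAlgHom_rel ℂ
    (show envRel t _ _ from Or.inr (Or.inl ⟨x, y, rfl, rfl⟩))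
  simp only [map_mul, map_add] at h
  exact h

lemma rel2 (y : Fin 3 → g₁) :
    ∑ σ : Equiv.Perm (Fin 3),
      envι t (0, y (σ 0)) * envι t (0, y (σ 1)) * envι t (0, y (σ 2)) =
      envι t (t (y 0) (y 1) (y 2), 0) := by
  have h := RingQuot.mkAlgHom_rel ℂ
    (show envRel t _ _ from Or.inr (Or.inr ⟨y, rfl, rfl⟩))
  simp only [map_sum, map_mul] at h
  exact h

lemma rel2' (y : Fin 3 → g₁) :
    ∑ σ : Equiv.Perm (Fin 3),
      envι t (0, y (σ 2)) * (envι t (0, y (σ 1)) * envι t (0, y (σ 0))) =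
      envι t (t (y 0) (y 1) (y 2), 0) := by
  rw [← rel2 t y,
    ← Equiv.sum_comp (Equiv.mulRight (Equiv.swap (0 : Fin 3) 2))
      (fun σ : Equiv.Perm (Fin 3) =>
        envι t (0, y (σ 0)) * envι t (0, y (σ 1)) * envι t (0, y (σ 2)))]
  refine Finset.sum_congr rfl fun σ _ => ?_
  have h0 : (Equiv.mulRight (Equiv.swap (0 : Fin 3) 2) σ) 0 = σ 2 := by
    simp [Equiv.Perm.mul_apply]
  have h1 : (Equiv.mulRight (Equiv.swap (0 : Fin 3) 2) σ) 1 = σ 1 := by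
    simp [Equiv.Perm.mul_apply, Equiv.swap_apply_of_ne_of_ne]
  have h2 : (Equiv.mulRight (Equiv.swap (0 : Fin 3) 2) σ) 2 = σ 0 := by
    simp [Equiv.Perm.mul_apply]
  rw [h0, h1, h2, mul_assoc]


open MulOpposite in
/-- The twisting-free antipode, as an algebra map to the opposite algebra. -/
noncomputable def antihom : UEnv t →ₐ[ℂ] (UEnv t)ᵐᵒᵖ :=
  RingQuot.liftAlgHom ℂ
    ⟨TensorAlgebra.lift ℂ
        ((MulOpposite.opLinearEquiv ℂ).toLinearMap ∘ₗ (-envιₗ t)), by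
      rintro a b (⟨x₁, x₂, rfl, rfl⟩ | ⟨x, y, rfl, rfl⟩ | ⟨y, rfl, rfl⟩)
      · apply unop_injective
        simp only [map_mul, map_add, TensorAlgebra.lift_ι_apply,
          LinearMap.comp_apply, LinearMap.neg_apply, envιₗ_apply,
          MulOpposite.coe_opLinearEquiv_toLinearMap, unop_mul, unop_add,
          unop_op, neg_mul_neg]
        rw [rel0 t x₂ x₁, show (⁅x₂, x₁⁆ : g₀) = -⁅x₁, x₂⁆ by rw [← lie_skew],
          show ((-⁅x₁, x₂⁆ : g₀), (0 : g₁)) = -((⁅x₁, x₂⁆ : g₀), (0 : g₁)) by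
            simp [Prod.ext_iff],
          envι_neg]
      · apply unop_injective
        simp only [map_mul, map_add, TensorAlgebra.lift_ι_apply,
          LinearMap.comp_apply, LinearMap.neg_apply, envιₗ_apply,
          MulOpposite.coe_opLinearEquiv_toLinearMap, unop_mul, unop_add,
          unop_op, neg_mul_neg]
        rw [rel1 t x y]
        abel
      · apply unop_injective
        simp only [map_sum, map_mul, map_add, TensorAlgebra.lift_ι_apply,
          LinearMap.comp_apply, LinearMap.neg_apply, envιₗ_apply,
          MulOpposite.coe_opLinearEquiv_toLinearMap, unop_mul, unop_add,
          unop_op, Finset.unop_sum, unop_neg, neg_mul_neg, mul_neg, neg_mul,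
          neg_neg]
        rw [Finset.sum_neg_distrib, rel2' t y]⟩


/-- The untwisted antipode as a linear map. -/
noncomputable def S0 : UEnv t →ₗ[ℂ] UEnv t :=
  (MulOpposite.opLinearEquiv ℂ).symm.toLinearMap ∘ₗ (antihom t).toLinearMap

lemma S0_apply (u : UEnv t) : S0 t u = MulOpposite.unop (antihom t u) := rfl

lemma S0_one : S0 t 1 = 1 := by
  rw [S0_apply, map_one]; rfl

lemma S0_mul (a b : UEnv t) : S0 t (a * b) = S0 t b * S0 t a := by
  rw [S0_apply, S0_apply, S0_apply, map_mul, MulOpposite.unop_mul]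

lemma S0_ι (z : g₀ × g₁) : S0 t (envι t z) = - envι t z := by
  rw [S0_apply, envι, antihom]
  erw [RingQuot.liftAlgHom_mkAlgHom_apply]
  rw [TensorAlgebra.lift_ι_apply]
  simp [envιₗ_apply, envι]
  rfl

/-- Generic induction principle: membership of all graded components of every
element of `U(g)` in a family of submodules. -/
lemma decompose_mem (𝒜 : ZMod 3 → Submodule ℂ (UEnv t)) [GradedAlgebra 𝒜]
    (h0 : ∀ x : g₀, envι t ((x, 0) : g₀ × g₁) ∈ 𝒜 0)
    (h1 : ∀ y : g₁, envι t ((0, y) : g₀ × g₁) ∈ 𝒜 1)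
    (M : ZMod 3 → Submodule ℂ (UEnv t))
    (hone : (1 : UEnv t) ∈ M 0)
    (hx : ∀ x : g₀, envι t ((x, 0) : g₀ × g₁) ∈ M 0)
    (hy : ∀ y : g₁, envι t ((0, y) : g₀ × g₁) ∈ M 1)
    (hmul : ∀ (j k : ZMod 3) (a b : UEnv t), a ∈ 𝒜 j → a ∈ M j → b ∈ 𝒜 k → b ∈ M k →
      a * b ∈ M (j + k)) :
    ∀ (u : UEnv t) (j : ZMod 3), (DirectSum.decompose 𝒜 u j : UEnv t) ∈ M j := by
  classical
  have helper : ∀ (m : ZMod 3) (u : UEnv t), u ∈ 𝒜 m → u ∈ M m →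
      ∀ j, (DirectSum.decompose 𝒜 u j : UEnv t) ∈ M j := by
    intro m u hAm hMm j
    by_cases hj : m = j
    · subst hj
      rw [DirectSum.decompose_of_mem_same 𝒜 hAm]
      exact hMm
    · rw [DirectSum.decompose_of_mem_ne 𝒜 hAm hj]
      exact zero_mem _
  intro u
  obtain ⟨a, rfl⟩ := RingQuot.mkAlgHom_surjective ℂ (envRel t) u
  induction a using TensorAlgebra.induction with
  | algebraMap r =>
      rw [AlgHom.commutes]
      refine helper 0 _ ?_ ?_
      · rw [Algebra.algebraMap_eq_smul_one]
        exact Submodule.smul_mem _ _ (SetLike.one_mem_graded 𝒜)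
      · rw [Algebra.algebraMap_eq_smul_one]
        exact Submodule.smul_mem _ _ hone
  | ι z =>
      obtain ⟨x, y⟩ := z
      intro j
      rw [show (RingQuot.mkAlgHom ℂ (envRel t)) (TensorAlgebra.ι ℂ ((x, y) : g₀ × g₁))
          = envι t (x, y) from rfl,
        envι_split, DirectSum.decompose_add, DirectSum.add_apply, Submodule.coe_add]
      exact add_mem (helper 0 _ (h0 x) (hx x) j) (helper 1 _ (h1 y) (hy y) j)
  | mul a b ha hb =>
      rw [show (RingQuot.mkAlgHom ℂ (envRel t)) (a * b) = @HMul.hMul (UEnv t) (UEnv t) (UEnv t) _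
          (RingQuot.mkAlgHom ℂ (envRel t) a) (RingQuot.mkAlgHom ℂ (envRel t) b) from map_mul _ _ _]
      set u : UEnv t := RingQuot.mkAlgHom ℂ (envRel t) a with hu
      set v : UEnv t := RingQuot.mkAlgHom ℂ (envRel t) b with hv
      intro m
      rw [← DirectSum.sum_support_decompose 𝒜 u, ← DirectSum.sum_support_decompose 𝒜 v,
        Finset.sum_mul_sum]
      simp only [DirectSum.decompose_sum]
      have hL : ∀ w : DirectSum (ZMod 3) (fun i => ↥(𝒜 i)), ((w m : UEnv t)) =
          ((𝒜 m).subtype ∘ₗ DirectSum.component ℂ (ZMod 3) (fun i => ↥(𝒜 i)) m) w :=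
        fun _ => rfl
      rw [hL, map_sum]
      apply Submodule.sum_mem
      intro j _
      rw [map_sum]
      apply Submodule.sum_mem
      intro k _
      exact helper (j + k) _
        (SetLike.mul_mem_graded (SetLike.coe_mem _) (SetLike.coe_mem _))
        (hmul j k _ _ (SetLike.coe_mem _) (ha j) (SetLike.coe_mem _) (hb k)) m
  | add a b ha hb =>
      intro j
      rw [show (RingQuot.mkAlgHom ℂ (envRel t)) (a + b) = @HAdd.hAdd (UEnv t) (UEnv t) (UEnv t) (@instHAdd (UEnv t) inferInstance)
          (RingQuot.mkAlgHom ℂ (envRel t) a) (RingQuot.mkAlgHom ℂ (envRel t) b) from map_add _ _ _]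
      refine (congrArg (· ∈ M j) (congrArg (fun w => ((w j : 𝒜 j) : UEnv t))
        (DirectSum.decompose_add (M := UEnv t) 𝒜 (RingQuot.mkAlgHom ℂ (envRel t) a : UEnv t)
          (RingQuot.mkAlgHom ℂ (envRel t) b)))).mpr ?_
      simp only [DirectSum.add_apply, Submodule.coe_add]
      exact add_mem (ha j) (hb j)

end AntipodeAux

open AntipodeAux in
/-- (Antipode.) There is a unique `ℂ`-linear map `S : U(g) → U(g)` with
`S(1) = 1`, `S(ι z) = -ι z` for `z ∈ g₀ ⊕ g₁`, and the twisted
anti-multiplicativity `S(ab) = q^{|a||b|} S(b) S(a)` for homogeneous `a, b`. -/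
theorem antipode_exists_unique (t : g₁ →ₗ[ℂ] g₁ →ₗ[ℂ] g₁ →ₗ[ℂ] g₀)
    (hsymm : ∀ y₁ y₂ y₃ : g₁, t y₁ y₂ y₃ = t y₂ y₁ y₃ ∧ t y₁ y₂ y₃ = t y₁ y₃ y₂)
    (hequiv : ∀ (x : g₀) (y₁ y₂ y₃ : g₁),
      ⁅x, t y₁ y₂ y₃⁆ = t ⁅x, y₁⁆ y₂ y₃ + t y₁ ⁅x, y₂⁆ y₃ + t y₁ y₂ ⁅x, y₃⁆)
    (hfund : ∀ y₁ y₂ y₃ y₄ : g₁,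
      ⁅t y₂ y₃ y₄, y₁⁆ + ⁅t y₁ y₃ y₄, y₂⁆ + ⁅t y₁ y₂ y₄, y₃⁆ + ⁅t y₁ y₂ y₃, y₄⁆
        = (0 : g₁))
    (q : ℂ) (hq3 : q ^ 3 = 1) (hq1 : q ≠ 1)
    (𝒜 : ZMod 3 → Submodule ℂ (UEnv t)) [GradedAlgebra 𝒜]
    (h0 : ∀ x : g₀, envι t ((x, 0) : g₀ × g₁) ∈ 𝒜 0)
    (h1 : ∀ y : g₁, envι t ((0, y) : g₀ × g₁) ∈ 𝒜 1) :
    ∃! S : UEnv t →ₗ[ℂ] UEnv t,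
      S 1 = 1 ∧
      (∀ z : g₀ × g₁, S (envι t z) = - envι t z) ∧
      (∀ (a b : UEnv t) (j k : ZMod 3), a ∈ 𝒜 j → b ∈ 𝒜 k →
        S (a * b) = q ^ (j.val * k.val) • (S b * S a)) := by
  classical
  -- `S0` preserves the grading
  have hgrade : ∀ (j : ZMod 3) (a : UEnv t), a ∈ 𝒜 j → S0 t a ∈ 𝒜 j := by
    intro j a haj
    have key := decompose_mem t 𝒜 h0 h1 (fun j => (𝒜 j).comap (S0 t))
      (by simp only [Submodule.mem_comap, S0_one]; exact SetLike.one_mem_graded 𝒜)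
      (fun x => by simp only [Submodule.mem_comap, S0_ι]; exact neg_mem (h0 x))
      (fun y => by simp only [Submodule.mem_comap, S0_ι]; exact neg_mem (h1 y))
      (by
        intro j k a b hAj hMj hAk hMk
        simp only [Submodule.mem_comap, S0_mul] at *
        rw [add_comm]
        exact SetLike.mul_mem_graded hMk hMj) a j
    rw [DirectSum.decompose_of_mem_same 𝒜 haj] at key
    exact key
  -- the twisting operator
  set c : ZMod 3 → ℂ := fun j => if j = 2 then q else 1 with hc
  set T : UEnv t →ₗ[ℂ] UEnv t :=
    ∑ j : ZMod 3, c j • (((𝒜 j).subtype ∘ₗ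
      DirectSum.component ℂ (ZMod 3) (fun i => ↥(𝒜 i)) j) ∘ₗ
      (DirectSum.decomposeLinearEquiv 𝒜).toLinearMap) with hT
  have hTapply : ∀ u : UEnv t,
      T u = ∑ j : ZMod 3, c j • (DirectSum.decompose 𝒜 u j : UEnv t) := by
    intro u
    rw [hT, LinearMap.sum_apply]
    rfl
  have hTmem : ∀ (m : ZMod 3) (u : UEnv t), u ∈ 𝒜 m → T u = c m • u := by
    intro m u hm
    rw [hTapply, Finset.sum_eq_single m]
    · rw [DirectSum.decompose_of_mem_same 𝒜 hm]
    · intro j _ hj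
      rw [DirectSum.decompose_of_mem_ne 𝒜 hm (Ne.symm hj), smul_zero]
    · intro h
      exact absurd (Finset.mem_univ m) h
  have hc0 : c 0 = 1 := by rw [hc]; exact if_neg (by decide)
  have hc1 : c 1 = 1 := by rw [hc]; exact if_neg (by decide)
  have hc2 : c 2 = q := by rw [hc]; exact if_pos rfl
  set S : UEnv t →ₗ[ℂ] UEnv t := T ∘ₗ S0 t with hS
  have hS1 : S 1 = 1 := by
    rw [hS, LinearMap.comp_apply, S0_one, hTmem 0 1 (SetLike.one_mem_graded 𝒜), hc0,
      one_smul]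
  have hSι : ∀ z : g₀ × g₁, S (envι t z) = - envι t z := by
    rintro ⟨x, y⟩
    rw [hS, LinearMap.comp_apply, S0_ι, envι_split t x y, neg_add, map_add, map_neg,
      map_neg, hTmem 0 _ (h0 x), hTmem 1 _ (h1 y), hc0, hc1, one_smul, one_smul]
  have hSmul : ∀ (a b : UEnv t) (j k : ZMod 3), a ∈ 𝒜 j → b ∈ 𝒜 k →
      S (a * b) = q ^ (j.val * k.val) • (S b * S a) := by
    intro a b j k haj hbk
    have hS0a := hgrade j a haj
    have hS0b := hgrade k b hbk
    have hmm : S0 t b * S0 t a ∈ 𝒜 (j + k) := by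
      rw [add_comm]; exact SetLike.mul_mem_graded hS0b hS0a
    rw [hS, LinearMap.comp_apply, S0_mul, hTmem _ _ hmm, LinearMap.comp_apply,
      LinearMap.comp_apply, hTmem _ _ hS0b, hTmem _ _ hS0a, smul_mul_smul_comm,
      smul_smul]
    congr 1
    have h3 : ∀ m : ZMod 3, m = 0 ∨ m = 1 ∨ m = 2 := by decide
    have hv0 : (0 : ZMod 3).val = 0 := rfl
    have hv1 : (1 : ZMod 3).val = 1 := rfl
    have hv2 : (2 : ZMod 3).val = 2 := rfl
    rcases h3 j with rfl | rfl | rfl <;> rcases h3 k with rfl | rfl | rfl <;>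
      simp only [hv0, hv1, hv2, hc0, hc1, hc2,
        show (0 : ZMod 3) + 0 = 0 from rfl, show (0 : ZMod 3) + 1 = 1 from rfl,
        show (0 : ZMod 3) + 2 = 2 from rfl, show (1 : ZMod 3) + 0 = 1 from rfl,
        show (1 : ZMod 3) + 1 = 2 from rfl, show (1 : ZMod 3) + 2 = 0 from rfl,
        show (2 : ZMod 3) + 0 = 2 from rfl, show (2 : ZMod 3) + 1 = 0 from rfl,
        show (2 : ZMod 3) + 2 = 1 from rfl] <;>
      first
        | ring1
        | linear_combination hq3
        | linear_combination q * hq3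
        | linear_combination (q ^ 3 + 1) * hq3
        | linear_combination -hq3
        | linear_combination -q * hq3
        | linear_combination -(q ^ 3 + 1) * hq3
  refine ⟨S, ⟨hS1, hSι, hSmul⟩, ?_⟩
  rintro S' ⟨hS1', hSι', hSmul'⟩
  have key := decompose_mem t 𝒜 h0 h1 (fun j => LinearMap.eqLocus S' S ⊓ 𝒜 j)
    (Submodule.mem_inf.mpr ⟨show S' 1 = S 1 by rw [hS1', hS1],
      SetLike.one_mem_graded 𝒜⟩)
    (fun x => Submodule.mem_inf.mpr
      ⟨show S' (envι t (x, 0)) = S (envι t (x, 0)) by rw [hSι', hSι], h0 x⟩)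
    (fun y => Submodule.mem_inf.mpr
      ⟨show S' (envι t (0, y)) = S (envι t (0, y)) by rw [hSι', hSι], h1 y⟩)
    (by
      intro j k a b hAj hMj hAk hMk
      rw [Submodule.mem_inf] at hMj hMk ⊢
      obtain ⟨hEa, _⟩ := hMj
      obtain ⟨hEb, _⟩ := hMk
      refine ⟨?_, SetLike.mul_mem_graded hAj hAk⟩
      have hEa' : S' a = S a := hEa
      have hEb' : S' b = S b := hEb
      show S' (a * b) = S (a * b)
      rw [hSmul' a b j k hAj hAk, hSmul a b j k hAj hAk, hEa', hEb'])
  apply LinearMap.ext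
  intro u
  have hu : ∀ j : ZMod 3, S' (DirectSum.decompose 𝒜 u j : UEnv t)
      = S (DirectSum.decompose 𝒜 u j : UEnv t) :=
    fun j => (Submodule.mem_inf.mp (key u j)).1
  conv_lhs => rw [← DirectSum.sum_support_decompose 𝒜 u]
  conv_rhs => rw [← DirectSum.sum_support_decompose 𝒜 u]
  rw [map_sum, map_sum]
  exact Finset.sum_congr rfl fun j _ => hu j
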